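/- Let n be a positive natural number, let Σ be a real symmetric positive definite n×n matrix, and let μ₁, μ₂ ∈ ℝⁿ. Then the Kullback–Leibler divergence between the multivariate Gaussian measures N(μ₁, Σ) and N(μ₂, Σ) on ℝⁿ equals ENNReal.ofReal( (1/2)·(μ₁ − μ₂)ᵀ Σ⁻¹ (μ₁ − μ₂) ). (For Gaussians with equal covariance matrices, the trace term and the log-determinant term of the Gaussian KL divergence vanish, leaving only the Mahalanobis term.) -/

import Mathlib

open Matrix MeasureTheory

open Classical in
/-- The Kullback–Leibler divergence `∫ log(dμ/dν) dμ` when `μ ≪ ν` with integrable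
log-density, and `∞` otherwise. -/
noncomputable def klDiv {α : Type*} [MeasurableSpace α] (μ ν : Measure α) : ENNReal :=
  if μ ≪ ν ∧ Integrable (MeasureTheory.llr μ ν) μ then
    ENNReal.ofReal (∫ x, MeasureTheory.llr μ ν x ∂μ)
  else ⊤

/-- The multivariate Gaussian measure `N(μ, Σ)` on `ℝⁿ`, given by its density with
respect to Lebesgue measure. -/
noncomputable def multivariateGaussian {n : ℕ} (μv : Fin n → ℝ)
    (S : Matrix (Fin n) (Fin n) ℝ) : Measure (Fin n → ℝ) :=
  volume.withDensity fun x =>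
    ENNReal.ofReal ((Real.sqrt ((2 * Real.pi) ^ n * S.det))⁻¹ *
      Real.exp (-(1 / 2 : ℝ) * ((x - μv) ⬝ᵥ (S⁻¹ *ᵥ (x - μv)))))


variable {n : ℕ}

lemma gauss1d_integrable : Integrable (fun t : ℝ => Real.exp (-(1/2) * t ^ 2)) volume := by
  simpa using integrable_exp_neg_mul_sq (by norm_num : (0:ℝ) < 1/2)

lemma gauss1d_integral : ∫ t : ℝ, Real.exp (-(1/2) * t ^ 2) = Real.sqrt (2 * Real.pi) := by
  have h := integral_gaussian (1/2)
  rw [show (Real.pi / (1/2) : ℝ) = 2 * Real.pi by ring] at h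
  exact h

lemma gauss1d_mul_integrable (a : ℝ) :
    Integrable (fun t : ℝ => a * t * Real.exp (-(1/2) * t ^ 2)) volume := by
  simpa [mul_assoc] using (integrable_mul_exp_neg_mul_sq (by norm_num : (0:ℝ) < 1/2)).const_mul a

lemma gauss1d_mul_integral (a : ℝ) : ∫ t : ℝ, a * t * Real.exp (-(1/2) * t ^ 2) = 0 := by
  have h := integral_neg_eq_self (fun t : ℝ => a * t * Real.exp (-(1/2) * t ^ 2)) volume
  have h2 : (fun t : ℝ => a * (-t) * Real.exp (-(1/2) * (-t) ^ 2))
      = fun t : ℝ => -(a * t * Real.exp (-(1/2) * t ^ 2)) := by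
    ext t; rw [neg_sq]; ring
  rw [h2, integral_neg] at h
  linarith

lemma std_density_eq (y : Fin n → ℝ) :
    Real.exp (-(1/2 : ℝ) * (y ⬝ᵥ y)) = ∏ i, Real.exp (-(1/2 : ℝ) * (y i) ^ 2) := by
  rw [← Real.exp_sum]
  congr 1
  rw [dotProduct, Finset.mul_sum]
  congr 1; ext i; ring

lemma std_integrable : Integrable (fun y : Fin n → ℝ => Real.exp (-(1/2 : ℝ) * (y ⬝ᵥ y))) volume := by
  have := MeasureTheory.Integrable.fintype_prod (ι := Fin n)
    (f := fun _ (t : ℝ) => Real.exp (-(1/2 : ℝ) * t ^ 2)) (fun _ => gauss1d_integrable)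
  exact this.congr (Filter.Eventually.of_forall fun y => (std_density_eq y).symm)

lemma std_integral : ∫ y : Fin n → ℝ, Real.exp (-(1/2 : ℝ) * (y ⬝ᵥ y)) = Real.sqrt (2 * Real.pi) ^ n := by
  calc ∫ y : Fin n → ℝ, Real.exp (-(1/2 : ℝ) * (y ⬝ᵥ y))
      = ∫ y : Fin n → ℝ, ∏ i, Real.exp (-(1/2 : ℝ) * (y i) ^ 2) := by
        congr 1; ext y; exact std_density_eq y
    _ = Real.sqrt (2 * Real.pi) ^ n := by
        rw [MeasureTheory.volume_pi, MeasureTheory.integral_fintype_prod_eq_pow (ι := Fin n) (fun t : ℝ => Real.exp (-(1/2 : ℝ) * t ^ 2)),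
          gauss1d_integral]
        simp

noncomputable def F (v : Fin n → ℝ) (i j : Fin n) (t : ℝ) : ℝ :=
  (if j = i then v i * t else 1) * Real.exp (-(1/2 : ℝ) * t ^ 2)

lemma F_integrable (v : Fin n → ℝ) (i j : Fin n) : Integrable (F v i j) volume := by
  unfold F
  by_cases h : j = i
  · simp only [if_pos h]
    exact gauss1d_mul_integrable (v i)
  · simp only [if_neg h, one_mul]
    exact gauss1d_integrable

lemma F_expand (v : Fin n → ℝ) (y : Fin n → ℝ) :
    (v ⬝ᵥ y) * Real.exp (-(1/2 : ℝ) * (y ⬝ᵥ y)) = ∑ i, ∏ j, F v i j (y j) := by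
  have hp : ∀ i, ∏ j, F v i j (y j)
      = (v i * y i) * Real.exp (-(1/2 : ℝ) * (y ⬝ᵥ y)) := by
    intro i
    unfold F
    rw [Finset.prod_mul_distrib, Finset.prod_ite_eq' Finset.univ i (fun j => v i * y j),
      ← std_density_eq y]
    simp
  rw [Finset.sum_congr rfl fun i _ => hp i, ← Finset.sum_mul, dotProduct]

lemma std_lin_integrable (v : Fin n → ℝ) :
    Integrable (fun y : Fin n → ℝ => (v ⬝ᵥ y) * Real.exp (-(1/2 : ℝ) * (y ⬝ᵥ y))) volume := by
  have : ∀ i : Fin n, Integrable (fun y : Fin n → ℝ => ∏ j, F v i j (y j)) volume :=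
    fun i => MeasureTheory.Integrable.fintype_prod (fun j => F_integrable v i j)
  exact (integrable_finset_sum Finset.univ (fun i _ => this i)).congr
    (Filter.Eventually.of_forall fun y => (F_expand v y).symm)

lemma std_lin_integral (v : Fin n → ℝ) :
    ∫ y : Fin n → ℝ, (v ⬝ᵥ y) * Real.exp (-(1/2 : ℝ) * (y ⬝ᵥ y)) = 0 := by
  rw [integral_congr_ae (Filter.Eventually.of_forall fun y => F_expand v y),
    MeasureTheory.volume_pi, integral_finset_sum Finset.univ
      (fun i _ => MeasureTheory.Integrable.fintype_prod (fun j => F_integrable v i j))]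
  refine Finset.sum_eq_zero fun i _ => ?_
  rw [MeasureTheory.integral_fintype_prod_eq_prod (F v i)]
  apply Finset.prod_eq_zero (Finset.mem_univ i)
  unfold F
  simp only [if_pos rfl]
  exact gauss1d_mul_integral (v i)

variable {n : ℕ}

lemma sqrt_pow' (x : ℝ) (hx : 0 ≤ x) (m : ℕ) : Real.sqrt (x ^ m) = Real.sqrt x ^ m := by
  rw [show x ^ m = (Real.sqrt x ^ m) ^ 2 by
      rw [← pow_mul, mul_comm, pow_mul, Real.sq_sqrt hx],
    Real.sqrt_sq (pow_nonneg (Real.sqrt_nonneg _) _)]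

lemma affine_measurable (B : Matrix (Fin n) (Fin n) ℝ) (μv : Fin n → ℝ) :
    Measurable (fun y : Fin n → ℝ => B *ᵥ y + μv) := by
  have : Continuous (fun y : Fin n → ℝ => B *ᵥ y + μv) := by
    have h1 : Continuous (fun y : Fin n → ℝ => B *ᵥ y) := by
      have := LinearMap.continuous_on_pi (Matrix.toLin' B)
      exact this
    fun_prop
  exact this.measurable

lemma map_affine (B : Matrix (Fin n) (Fin n) ℝ) (hd : B.det ≠ 0) (μv : Fin n → ℝ) :
    Measure.map (fun y => B *ᵥ y + μv) (volume : Measure (Fin n → ℝ))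
      = ENNReal.ofReal |B.det⁻¹| • volume := by
  have h1 : (fun y : Fin n → ℝ => B *ᵥ y + μv) = (fun x => x + μv) ∘ (Matrix.toLin' B) := by
    ext y i; simp [Matrix.toLin'_apply]
  rw [h1, ← Measure.map_map (by fun_prop) (by
      exact Continuous.measurable (LinearMap.continuous_on_pi _)),
    Real.map_matrix_volume_pi_eq_smul_volume_pi hd, Measure.map_smul,
    map_add_right_eq_self]

lemma integral_comp_affine (B : Matrix (Fin n) (Fin n) ℝ) (hd : B.det ≠ 0) (μv : Fin n → ℝ)
    {h : (Fin n → ℝ) → ℝ} (hm : Measurable h) :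
    ∫ x, h x = |B.det| * ∫ y, h (B *ᵥ y + μv) := by
  have hmap := map_affine B hd μv
  have h2 : ∫ y, h (B *ᵥ y + μv)
      = ∫ x, h x ∂(Measure.map (fun y => B *ᵥ y + μv) (volume : Measure (Fin n → ℝ))) := by
    rw [integral_map (affine_measurable B μv).aemeasurable]
    exact hm.aestronglyMeasurable
  rw [h2, hmap, integral_smul_measure, ENNReal.toReal_ofReal (abs_nonneg _), smul_eq_mul,
    ← mul_assoc, abs_inv, mul_inv_cancel₀ (by simpa using hd), one_mul]

lemma integrable_comp_affine (B : Matrix (Fin n) (Fin n) ℝ) (hd : B.det ≠ 0) (μv : Fin n → ℝ)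
    {h : (Fin n → ℝ) → ℝ} (hm : Measurable h) :
    Integrable h volume ↔ Integrable (fun y => h (B *ᵥ y + μv)) volume := by
  have hmap := map_affine B hd μv
  have h1 : Integrable h (Measure.map (fun y => B *ᵥ y + μv) (volume : Measure (Fin n → ℝ)))
      ↔ Integrable (fun y => h (B *ᵥ y + μv)) volume := by
    rw [integrable_map_measure hm.aestronglyMeasurable (affine_measurable B μv).aemeasurable]
    rfl
  rw [← h1, hmap, integrable_smul_measure (by simp [hd]) (by simp)]

section posdef
variable {S : Matrix (Fin n) (Fin n) ℝ} (hS : S.PosDef)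

open scoped MatrixOrder in
noncomputable def sqrtM (hS : S.PosDef) : Matrix (Fin n) (Fin n) ℝ := CFC.sqrt S

open scoped MatrixOrder in
lemma sqrtM_mul_self : sqrtM hS * sqrtM hS = S := CFC.sqrt_mul_sqrt_self S hS.posSemidef.nonneg

lemma sqrtM_det_sq : (sqrtM hS).det ^ 2 = S.det := by
  rw [pow_two, ← Matrix.det_mul, sqrtM_mul_self]

lemma sqrtM_det_ne_zero : (sqrtM hS).det ≠ 0 := by
  intro h
  have := sqrtM_det_sq hS
  rw [h] at this
  exact hS.det_pos.ne' (by simpa using this.symm)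

lemma sqrtM_abs_det : |(sqrtM hS).det| = Real.sqrt S.det := by
  rw [← sqrtM_det_sq hS, Real.sqrt_sq_eq_abs]

open scoped MatrixOrder in
lemma sqrtM_transpose : (sqrtM hS)ᵀ = sqrtM hS := by
  have h := (CFC.sqrt_nonneg S).posSemidef.1
  simpa [Matrix.IsHermitian, sqrtM] using h

lemma sqrtM_inv_quad : sqrtM hS * (S⁻¹ * sqrtM hS) = 1 := by
  have hinv : S⁻¹ = (sqrtM hS)⁻¹ * (sqrtM hS)⁻¹ := by
    rw [← Matrix.mul_inv_rev, sqrtM_mul_self]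
  rw [hinv, ← Matrix.mul_assoc, ← Matrix.mul_assoc,
    Matrix.mul_nonsing_inv _ (sqrtM_det_ne_zero hS).isUnit, Matrix.one_mul,
    Matrix.nonsing_inv_mul _ (sqrtM_det_ne_zero hS).isUnit]

lemma sqrtM_quad (y : Fin n → ℝ) :
    (sqrtM hS *ᵥ y) ⬝ᵥ (S⁻¹ *ᵥ (sqrtM hS *ᵥ y)) = y ⬝ᵥ y := by
  rw [Matrix.mulVec_mulVec, Matrix.dotProduct_mulVec]
  have h1 : sqrtM hS *ᵥ y = y ᵥ* (sqrtM hS) := by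
    rw [← Matrix.vecMul_transpose, sqrtM_transpose]
  rw [h1, Matrix.vecMul_vecMul, ← Matrix.mul_assoc, Matrix.mul_assoc,
    sqrtM_inv_quad hS, Matrix.vecMul_one]

end posdef

section gaussfacts
variable {S : Matrix (Fin n) (Fin n) ℝ}

noncomputable def gpdf (μv : Fin n → ℝ) (S : Matrix (Fin n) (Fin n) ℝ) (x : Fin n → ℝ) : ℝ :=
  (Real.sqrt ((2 * Real.pi) ^ n * S.det))⁻¹ *
      Real.exp (-(1 / 2 : ℝ) * ((x - μv) ⬝ᵥ (S⁻¹ *ᵥ (x - μv))))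

lemma quad_continuous (A : Matrix (Fin n) (Fin n) ℝ) (μv : Fin n → ℝ) :
    Continuous fun x : Fin n → ℝ => (x - μv) ⬝ᵥ (A *ᵥ (x - μv)) := by
  simp only [dotProduct, Matrix.mulVec]
  fun_prop

lemma gpdf_continuous (μv : Fin n → ℝ) : Continuous (gpdf μv S) := by
  unfold gpdf
  exact continuous_const.mul (Real.continuous_exp.comp
    (continuous_const.mul (quad_continuous S⁻¹ μv)))

lemma gpdf_nonneg (μv : Fin n → ℝ) (x : Fin n → ℝ) : 0 ≤ gpdf μv S x := by
  unfold gpdf; positivity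

lemma dot_continuous (w : Fin n → ℝ) (c₀ : ℝ) :
    Continuous fun x : Fin n → ℝ => w ⬝ᵥ x + c₀ := by
  simp only [dotProduct]; fun_prop

lemma norm_const (hS : S.PosDef) :
    |(sqrtM hS).det| * ((Real.sqrt ((2 * Real.pi) ^ n * S.det))⁻¹ * Real.sqrt (2 * Real.pi) ^ n) = 1 := by
  rw [sqrtM_abs_det hS, Real.sqrt_mul (pow_nonneg (by positivity) n), sqrt_pow' _ (by positivity)]
  have h1 : (0:ℝ) < Real.sqrt (2 * Real.pi) := Real.sqrt_pos.mpr (by positivity)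
  have h2 : (0:ℝ) < Real.sqrt S.det := Real.sqrt_pos.mpr hS.det_pos
  field_simp

lemma gauss_moment (hS : S.PosDef) (μv : Fin n → ℝ) (w : Fin n → ℝ) (c₀ : ℝ) :
    Integrable (fun x => gpdf μv S x * (w ⬝ᵥ x + c₀)) volume ∧
    ∫ x, gpdf μv S x * (w ⬝ᵥ x + c₀) = w ⬝ᵥ μv + c₀ := by
  set B := sqrtM hS with hB
  set Cn := (Real.sqrt ((2 * Real.pi) ^ n * S.det))⁻¹ with hCn
  have hm : Measurable fun x => gpdf μv S x * (w ⬝ᵥ x + c₀) :=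
    ((gpdf_continuous μv).mul (dot_continuous w c₀)).measurable
  have hcomp : ∀ y : Fin n → ℝ, gpdf μv S (B *ᵥ y + μv) * (w ⬝ᵥ (B *ᵥ y + μv) + c₀)
      = Cn * (((w ᵥ* B) ⬝ᵥ y) * Real.exp (-(1/2 : ℝ) * (y ⬝ᵥ y)))
        + (w ⬝ᵥ μv + c₀) * (Cn * Real.exp (-(1/2 : ℝ) * (y ⬝ᵥ y))) := by
    intro y
    have h1 : (B *ᵥ y + μv) - μv = B *ᵥ y := add_sub_cancel_right _ _
    unfold gpdf
    rw [h1, sqrtM_quad hS y, dotProduct_add, Matrix.dotProduct_mulVec]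
    ring
  have hint2 : Integrable (fun y : Fin n → ℝ =>
      Cn * (((w ᵥ* B) ⬝ᵥ y) * Real.exp (-(1/2 : ℝ) * (y ⬝ᵥ y)))
        + (w ⬝ᵥ μv + c₀) * (Cn * Real.exp (-(1/2 : ℝ) * (y ⬝ᵥ y)))) volume :=
    ((std_lin_integrable (w ᵥ* B)).const_mul Cn).add
      ((std_integrable.const_mul Cn).const_mul (w ⬝ᵥ μv + c₀))
  constructor
  · rw [integrable_comp_affine B (sqrtM_det_ne_zero hS) μv hm]
    exact hint2.congr (Filter.Eventually.of_forall fun y => (hcomp y).symm)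
  · rw [integral_comp_affine B (sqrtM_det_ne_zero hS) μv hm]
    rw [integral_congr_ae (Filter.Eventually.of_forall hcomp)]
    rw [integral_add (((std_lin_integrable (w ᵥ* B)).const_mul Cn))
      ((std_integrable.const_mul Cn).const_mul (w ⬝ᵥ μv + c₀)),
      integral_const_mul, integral_const_mul, integral_const_mul, std_lin_integral,
      std_integral]
    have := norm_const hS
    rw [← hB, ← hCn] at this
    calc |B.det| * (Cn * 0 + (w ⬝ᵥ μv + c₀) * (Cn * Real.sqrt (2 * Real.pi) ^ n))
        = (w ⬝ᵥ μv + c₀) * (|B.det| * (Cn * Real.sqrt (2 * Real.pi) ^ n)) := by ring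
      _ = w ⬝ᵥ μv + c₀ := by rw [this, mul_one]

end gaussfacts


lemma symdot (A : Matrix (Fin n) (Fin n) ℝ) (hA : Aᵀ = A) (u v : Fin n → ℝ) :
    u ⬝ᵥ A *ᵥ v = v ⬝ᵥ A *ᵥ u := by
  rw [Matrix.dotProduct_mulVec, ← Matrix.mulVec_transpose, hA, dotProduct_comm]

lemma affine_ident (A : Matrix (Fin n) (Fin n) ℝ) (hA : Aᵀ = A) (μ₁ μ₂ x : Fin n → ℝ) :
    (-(1/2 : ℝ) * ((x - μ₁) ⬝ᵥ (A *ᵥ (x - μ₁)))) - (-(1/2 : ℝ) * ((x - μ₂) ⬝ᵥ (A *ᵥ (x - μ₂))))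
      = (A *ᵥ (μ₁ - μ₂)) ⬝ᵥ x + (1/2 : ℝ) * ((μ₂ ⬝ᵥ (A *ᵥ μ₂)) - (μ₁ ⬝ᵥ (A *ᵥ μ₁))) := by
  simp only [Matrix.mulVec_sub, dotProduct_sub, sub_dotProduct]
  rw [symdot A hA μ₁ x, symdot A hA μ₂ x, dotProduct_comm (A *ᵥ μ₁) x,
    dotProduct_comm (A *ᵥ μ₂) x]
  ring

lemma final_ident (A : Matrix (Fin n) (Fin n) ℝ) (hA : Aᵀ = A) (μ₁ μ₂ : Fin n → ℝ) :
    (A *ᵥ (μ₁ - μ₂)) ⬝ᵥ μ₁ + (1/2 : ℝ) * ((μ₂ ⬝ᵥ (A *ᵥ μ₂)) - (μ₁ ⬝ᵥ (A *ᵥ μ₁)))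
      = (1/2 : ℝ) * ((μ₁ - μ₂) ⬝ᵥ (A *ᵥ (μ₁ - μ₂))) := by
  simp only [Matrix.mulVec_sub, dotProduct_sub, sub_dotProduct]
  rw [symdot A hA μ₂ μ₁, dotProduct_comm (A *ᵥ μ₁) μ₁, dotProduct_comm (A *ᵥ μ₂) μ₁]
  ring

section measurelvl
variable {S : Matrix (Fin n) (Fin n) ℝ}

lemma mg_def (μv : Fin n → ℝ) :
    multivariateGaussian μv S
      = volume.withDensity fun x => ENNReal.ofReal (gpdf μv S x) := rfl

lemma mg_density_eq (μv : Fin n → ℝ) :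
    multivariateGaussian μv S
      = volume.withDensity fun x => ((gpdf μv S x).toNNReal : ENNReal) := rfl

lemma gpdf_toNNReal_measurable (μv : Fin n → ℝ) :
    Measurable fun x => (gpdf μv S x).toNNReal :=
  ((gpdf_continuous (S := S) μv).measurable).real_toNNReal

lemma gpdf_integrable (hS : S.PosDef) (μv : Fin n → ℝ) : Integrable (gpdf μv S) volume := by
  refine (gauss_moment hS μv 0 1).1.congr (Filter.Eventually.of_forall fun x => ?_)
  simp [zero_dotProduct]

lemma gpdf_integral (hS : S.PosDef) (μv : Fin n → ℝ) : ∫ x, gpdf μv S x = 1 := by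
  have h := (gauss_moment hS μv 0 1).2
  simpa [zero_dotProduct] using h

lemma mg_prob (hS : S.PosDef) (μv : Fin n → ℝ) :
    IsProbabilityMeasure (multivariateGaussian μv S) := by
  constructor
  rw [mg_def, withDensity_apply _ MeasurableSet.univ, setLIntegral_univ,
    ← ofReal_integral_eq_lintegral_ofReal (gpdf_integrable hS μv)
      (Filter.Eventually.of_forall (gpdf_nonneg μv)),
    gpdf_integral hS μv, ENNReal.ofReal_one]

lemma mg_lin_integrable (hS : S.PosDef) (μv w : Fin n → ℝ) (c₀ : ℝ) :
    Integrable (fun x => w ⬝ᵥ x + c₀) (multivariateGaussian μv S) := by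
  rw [mg_density_eq, integrable_withDensity_iff_integrable_smul (gpdf_toNNReal_measurable μv)]
  refine (gauss_moment hS μv w c₀).1.congr (Filter.Eventually.of_forall fun x => ?_)
  simp only [NNReal.smul_def, smul_eq_mul, Real.coe_toNNReal _ (gpdf_nonneg μv x)]

lemma mg_lin_integral (hS : S.PosDef) (μv w : Fin n → ℝ) (c₀ : ℝ) :
    ∫ x, (w ⬝ᵥ x + c₀) ∂(multivariateGaussian μv S) = w ⬝ᵥ μv + c₀ := by
  rw [mg_density_eq, integral_withDensity_eq_integral_smul (gpdf_toNNReal_measurable μv)]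
  rw [← (gauss_moment hS μv w c₀).2]
  congr 1
  funext x
  simp only [NNReal.smul_def, smul_eq_mul, Real.coe_toNNReal _ (gpdf_nonneg μv x)]

end measurelvl

/-- For Gaussians with equal covariance matrices the KL divergence reduces to the
Mahalanobis term: `KL(N(μ₁,Σ) ‖ N(μ₂,Σ)) = (1/2)(μ₁−μ₂)ᵀΣ⁻¹(μ₁−μ₂)`. -/
theorem klDiv_gaussian_same_cov
    (n : ℕ) (hn : 0 < n) (S : Matrix (Fin n) (Fin n) ℝ) (hS : S.PosDef)
    (μ₁ μ₂ : Fin n → ℝ) :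
    klDiv (multivariateGaussian μ₁ S) (multivariateGaussian μ₂ S)
      = ENNReal.ofReal ((1 / 2 : ℝ) * ((μ₁ - μ₂) ⬝ᵥ (S⁻¹ *ᵥ (μ₁ - μ₂)))) := by
  classical
  set A := S⁻¹ with hA
  have hSt : Sᵀ = S := hS.1.eq
  have hAt : Aᵀ = A := by rw [hA, Matrix.transpose_nonsing_inv, hSt]
  set w := A *ᵥ (μ₁ - μ₂) with hw
  set c₀ := (1/2 : ℝ) * ((μ₂ ⬝ᵥ (A *ᵥ μ₂)) - (μ₁ ⬝ᵥ (A *ᵥ μ₁))) with hc₀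
  set γ₁ := multivariateGaussian μ₁ S with hγ₁
  set γ₂ := multivariateGaussian μ₂ S with hγ₂
  haveI : IsProbabilityMeasure γ₂ := mg_prob hS μ₂
  set ℓ : (Fin n → ℝ) → ℝ := fun x =>
    (-(1/2 : ℝ) * ((x - μ₁) ⬝ᵥ (A *ᵥ (x - μ₁))))
      - (-(1/2 : ℝ) * ((x - μ₂) ⬝ᵥ (A *ᵥ (x - μ₂)))) with hℓ
  have hℓcont : Continuous ℓ := (continuous_const.mul (quad_continuous A μ₁)).sub
    (continuous_const.mul (quad_continuous A μ₂))
  set r : (Fin n → ℝ) → ENNReal := fun x => ENNReal.ofReal (Real.exp (ℓ x)) with hr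
  have hrm : Measurable r := (Real.continuous_exp.comp hℓcont).measurable.ennreal_ofReal
  have heq : γ₁ = γ₂.withDensity r := by
    rw [hγ₁, hγ₂, mg_def, mg_def,
      ← withDensity_mul volume (((gpdf_continuous (S := S) μ₂).measurable).ennreal_ofReal) hrm]
    congr 1
    funext x
    rw [Pi.mul_apply, hr, ← ENNReal.ofReal_mul (gpdf_nonneg μ₂ x)]
    congr 1
    unfold gpdf
    rw [hℓ, mul_assoc, ← Real.exp_add]
    congr 2
    ring
  have hac : γ₁ ≪ γ₂ := heq ▸ withDensity_absolutelyContinuous γ₂ r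
  have hrn : (γ₂.withDensity r).rnDeriv γ₂ =ᵐ[γ₂] r := Measure.rnDeriv_withDensity γ₂ hrm
  have hllr₂ : MeasureTheory.llr γ₁ γ₂ =ᵐ[γ₂] ℓ := by
    rw [heq]
    filter_upwards [hrn] with x hx
    rw [MeasureTheory.llr_def]
    simp only [hx]
    simp only [hx, hr, ENNReal.toReal_ofReal (Real.exp_nonneg _), Real.log_exp]
  have hllr₁ : MeasureTheory.llr γ₁ γ₂ =ᵐ[γ₁] ℓ := hac.ae_le hllr₂
  have hlin : ℓ = fun x => w ⬝ᵥ x + c₀ := by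
    funext x
    rw [hℓ, hw, hc₀]
    exact affine_ident A hAt μ₁ μ₂ x
  have hint : Integrable (MeasureTheory.llr γ₁ γ₂) γ₁ := by
    refine (mg_lin_integrable hS μ₁ w c₀).congr ?_
    rw [← hlin]
    exact hllr₁.symm
  have hval : ∫ x, MeasureTheory.llr γ₁ γ₂ x ∂γ₁
      = (1 / 2 : ℝ) * ((μ₁ - μ₂) ⬝ᵥ (S⁻¹ *ᵥ (μ₁ - μ₂))) := by
    rw [integral_congr_ae hllr₁, hlin, mg_lin_integral hS μ₁ w c₀, hw, hc₀]
    exact final_ident A hAt μ₁ μ₂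
  rw [klDiv, if_pos ⟨hac, hint⟩, hval]
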